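/- CAID(g) is a Lie ideal in AID(g): if C is a central almost inner derivation and D is an almost inner derivation of a Lie algebra g, then [D,C] is central almost inner. -/
import Mathlib


/-- CAID(g) is a Lie ideal in AID(g): if `C` is central almost inner and `D` is
almost inner, then `⁅D, C⁆` is central almost inner. -/
theorem stmt2 {K L : Type*} [Field K] [LieRing L] [LieAlgebra K L]
    (D C : LieDerivation K L L)
    (hD : ∀ x : L, ∃ y : L, D x = ⁅y, x⁆)
    (hC : ∀ x : L, ∃ y : L, C x = ⁅y, x⁆)
    (hCc : ∃ x : L, ∀ z : L, C z - ⁅x, z⁆ ∈ LieAlgebra.center K L) :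
    (∀ x : L, ∃ y : L, (⁅D, C⁆ : LieDerivation K L L) x = ⁅y, x⁆) ∧
    (∃ x : L, ∀ z : L, (⁅D, C⁆ : LieDerivation K L L) z - ⁅x, z⁆ ∈ LieAlgebra.center K L) := by
  obtain ⟨x, hx⟩ := hCc
  have hcent : ∀ c : L, c ∈ LieAlgebra.center K L → ∀ a : L, ⁅a, c⁆ = 0 ∧ ⁅c, a⁆ = 0 := by
    intro c hc a
    have h1 : ⁅a, c⁆ = 0 := (LieModule.mem_maxTrivSubmodule K L L c).mp hc a
    exact ⟨h1, by rw [← lie_skew, h1, neg_zero]⟩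
  have key : ∀ z : L, (⁅D, C⁆ : LieDerivation K L L) z = ⁅D x, z⁆ := by
    intro z
    obtain ⟨v, hv⟩ := hD z
    -- D kills the central element C z - ⁅x, z⁆
    have hDc : D (C z - ⁅x, z⁆) = 0 := by
      obtain ⟨y, hy⟩ := hD (C z - ⁅x, z⁆)
      rw [hy, (hcent _ (hx z) y).1]
    -- C (D z) = ⁅x, D z⁆
    have hCD : C (D z) = ⁅x, D z⁆ := by
      have h1 : ⁅C v - ⁅x, v⁆, z⁆ = 0 := (hcent _ (hx v) z).2
      have h2 : ⁅v, C z - ⁅x, z⁆⁆ = 0 := (hcent _ (hx z) v).1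
      rw [hv, C.apply_lie_eq_add, leibniz_lie x v z]
      rw [sub_lie] at h1
      rw [lie_sub] at h2
      have h1' : ⁅C v, z⁆ = ⁅⁅x, v⁆, z⁆ := by linear_combination (norm := abel) h1
      have h2' : ⁅v, C z⁆ = ⁅v, ⁅x, z⁆⁆ := by linear_combination (norm := abel) h2
      rw [h1', h2']; abel
    have hDC : D (C z) = ⁅D x, z⁆ + ⁅x, D z⁆ := by
      have : C z = ⁅x, z⁆ + (C z - ⁅x, z⁆) := by abel
      rw [this, map_add, hDc, add_zero, D.apply_lie_eq_add]; abel
    rw [LieDerivation.commutator_apply, hDC, hCD]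
    abel
  refine ⟨fun z => ⟨D x, key z⟩, ⟨D x, fun z => ?_⟩⟩
  rw [key z, sub_self]
  exact Submodule.zero_mem _
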